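/- arXiv:1704.04376 — 2 statements merged into one kernel-verified Lean document; each statement's English description precedes it below -/
import Mathlib

section
/- The inverse moment of the Marchenko–Pastur-type measure equals 1/(ρ̃ − 1): ∫ x^{-1} dμ_mp(x) = ∫_{λ₋}^{λ₊} √((λ₊ − x)(x − λ₋)) / (2π x²) dx = 1/(ρ̃ − 1). (This is the value S_{μ_mp}(0) of the Stieltjes transform at z = 0, the key step in the appendix proof of equation (4) of Lemma 1.) -/
open MeasureTheory Real


lemma mp_hasDeriv (a b : ℝ) (ha : 0 < a) (hab : a < b) {x : ℝ} (hx : x ∈ Set.Ioo a b) :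
    HasDerivAt (fun y : ℝ => (a+b)/(2*Real.sqrt (a*b)) *
        Real.arcsin (((a+b)*y - 2*(a*b))/((b-a)*y))
      - Real.arcsin ((2*y-(a+b))/(b-a))
      - Real.sqrt ((b-y)*(y-a))/y)
      (Real.sqrt ((b - x) * (x - a)) / x ^ 2) x := by
  obtain ⟨hax, hxb⟩ := hx
  have hx0 : 0 < x := ha.trans hax
  have hb : 0 < b := hx0.trans hxb
  have hba : (0:ℝ) < b - a := sub_pos.2 hab
  have hR : 0 < (b - x) * (x - a) := mul_pos (by linarith) (by linarith)
  set s := Real.sqrt ((b - x) * (x - a)) with hsdef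
  set t := Real.sqrt (a * b) with htdef
  have hs : 0 < s := Real.sqrt_pos.2 hR
  have ht : 0 < t := Real.sqrt_pos.2 (mul_pos ha hb)
  have hs2 : s ^ 2 = (b - x) * (x - a) := Real.sq_sqrt hR.le
  have ht2 : t ^ 2 = a * b := Real.sq_sqrt (mul_pos ha hb).le
  have hbx : 0 < (b - a) * x := mul_pos hba hx0
  -- bounds for arcsin arguments
  have hu_lt : (2*x-(a+b))/(b-a) < 1 := (div_lt_one hba).2 (by linarith)
  have hu_gt : -1 < (2*x-(a+b))/(b-a) := (lt_div_iff₀ hba).2 (by nlinarith)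
  have hv_lt : ((a+b)*x - 2*(a*b))/((b-a)*x) < 1 := (div_lt_one hbx).2 (by nlinarith)
  have hv_gt : -1 < ((a+b)*x - 2*(a*b))/((b-a)*x) := (lt_div_iff₀ hbx).2 (by nlinarith)
  -- derivative of inner linear/rational maps
  have d1 : HasDerivAt (fun y : ℝ => (2*y-(a+b))/(b-a)) (2/(b-a)) x := by
    have h : HasDerivAt (fun y : ℝ => 2*y-(a+b)) 2 x := by
      simpa using ((hasDerivAt_id x).const_mul (2:ℝ)).sub_const (a+b)
    exact h.div_const (b-a)
  have a1 : HasDerivAt (fun y : ℝ => Real.arcsin ((2*y-(a+b))/(b-a)))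
      (1 / Real.sqrt (1 - ((2*x-(a+b))/(b-a))^2) * (2/(b-a))) x :=
    by
      have := (Real.hasDerivAt_arcsin (ne_of_gt hu_gt) (ne_of_lt hu_lt)).comp x d1
      exact this
  have hn : HasDerivAt (fun y : ℝ => (a+b)*y - 2*(a*b)) (a+b) x := by
    simpa using ((hasDerivAt_id x).const_mul (a+b)).sub_const (2*(a*b))
  have hd : HasDerivAt (fun y : ℝ => (b-a)*y) (b-a) x := by
    simpa using (hasDerivAt_id x).const_mul (b-a)
  have d2 : HasDerivAt (fun y : ℝ => ((a+b)*y - 2*(a*b))/((b-a)*y))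
      (((a+b)*((b-a)*x) - ((a+b)*x - 2*(a*b))*(b-a))/((b-a)*x)^2) x := hn.div hd (ne_of_gt hbx)
  have a2 : HasDerivAt (fun y : ℝ => Real.arcsin (((a+b)*y - 2*(a*b))/((b-a)*y)))
      (1 / Real.sqrt (1 - (((a+b)*x - 2*(a*b))/((b-a)*x))^2) *
        (((a+b)*((b-a)*x) - ((a+b)*x - 2*(a*b))*(b-a))/((b-a)*x)^2)) x :=
    by
      have := (Real.hasDerivAt_arcsin (ne_of_gt hv_gt) (ne_of_lt hv_lt)).comp x d2
      exact this
  have dR : HasDerivAt (fun y : ℝ => (b-y)*(y-a)) (a + b - 2*x) x := by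
    have h1 : HasDerivAt (fun y : ℝ => b - y) (-1) x := by
      simpa using (hasDerivAt_id x).const_sub b
    have h2 : HasDerivAt (fun y : ℝ => y - a) 1 x := (hasDerivAt_id x).sub_const a
    have := h1.mul h2
    have e : a + b - 2*x = -1 * (x - a) + (b - x) * 1 := by ring
    rw [e]; exact this
  have dsq : HasDerivAt (fun y : ℝ => Real.sqrt ((b-y)*(y-a))) ((a + b - 2*x) / (2 * s)) x :=
    dR.sqrt (ne_of_gt hR)
  have d3 : HasDerivAt (fun y : ℝ => Real.sqrt ((b-y)*(y-a))/y)
      (((a + b - 2*x) / (2 * s) * x - s * 1)/x^2) x := dsq.div (hasDerivAt_id x) hx0.ne'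
  have big := ((a2.const_mul ((a+b)/(2*t))).sub a1).sub d3
  refine big.congr_deriv ?_
  -- now prove the algebraic identity
  have hu : Real.sqrt (1 - ((2*x-(a+b))/(b-a))^2) = 2/(b-a) * s := by
    have h : 1 - ((2*x-(a+b))/(b-a))^2 = (2/(b-a))^2 * ((b - x) * (x - a)) := by
      field_simp
      ring
    rw [h, Real.sqrt_mul (sq_nonneg _), Real.sqrt_sq (by positivity), ← hsdef]
  have hv : Real.sqrt (1 - (((a+b)*x - 2*(a*b))/((b-a)*x))^2) = 2*t/((b-a)*x) * s := by
    have h : 1 - (((a+b)*x - 2*(a*b))/((b-a)*x))^2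
        = (2*t/((b-a)*x))^2 * ((b - x) * (x - a)) := by
      have h4 : (2*t/((b-a)*x))^2 = 4*(a*b)/((b-a)*x)^2 := by
        rw [div_pow, mul_pow, ht2]; ring_nf
      rw [h4]
      field_simp
      ring
    rw [h, Real.sqrt_mul (sq_nonneg _), Real.sqrt_sq (by positivity), ← hsdef]
  rw [hu, hv, ← ht2]
  field_simp
  ring

lemma mp_integral (a b : ℝ) (ha : 0 < a) (hab : a < b) :
    ∫ x in a..b, Real.sqrt ((b - x) * (x - a)) / x ^ 2
      = π * (a + b) / (2 * Real.sqrt (a * b)) - π := by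
  have hb : 0 < b := ha.trans hab
  have hba : (0:ℝ) < b - a := sub_pos.2 hab
  set F : ℝ → ℝ := fun y : ℝ => (a+b)/(2*Real.sqrt (a*b)) *
        Real.arcsin (((a+b)*y - 2*(a*b))/((b-a)*y))
      - Real.arcsin ((2*y-(a+b))/(b-a))
      - Real.sqrt ((b-y)*(y-a))/y with hF
  have h0 : ∀ y ∈ Set.Icc a b, ((b-a)*y) ≠ 0 := by
    intro y hy
    have : 0 < y := lt_of_lt_of_le ha hy.1
    positivity
  have hcont : ContinuousOn F (Set.Icc a b) := by
    apply ContinuousOn.sub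
    apply ContinuousOn.sub
    · exact continuousOn_const.mul (Real.continuous_arcsin.comp_continuousOn
        (((continuous_const.mul continuous_id).sub continuous_const).continuousOn.div
          ((continuous_const.mul continuous_id).continuousOn) h0))
    · exact (Real.continuous_arcsin.comp
        (((continuous_const.mul continuous_id).sub continuous_const).div_const _)).continuousOn
    · refine ContinuousOn.div ?_ continuousOn_id ?_
      · exact (Real.continuous_sqrt.comp
          ((continuous_const.sub continuous_id).mul (continuous_id.sub continuous_const))).continuousOn
      · intro y hy; exact (lt_of_lt_of_le ha hy.1).ne'
  have hint : IntervalIntegrable (fun x => Real.sqrt ((b - x) * (x - a)) / x ^ 2) volume a b := by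
    apply ContinuousOn.intervalIntegrable
    rw [Set.uIcc_of_le hab.le]
    refine ContinuousOn.div ?_ (continuous_pow 2).continuousOn ?_
    · exact (Real.continuous_sqrt.comp
        ((continuous_const.sub continuous_id).mul (continuous_id.sub continuous_const))).continuousOn
    · intro y hy
      have : 0 < y := lt_of_lt_of_le ha hy.1
      positivity
  have key := intervalIntegral.integral_eq_sub_of_hasDerivAt_of_le hab.le hcont
    (fun x hx => mp_hasDeriv a b ha hab hx) hint
  rw [key, hF]
  have e1 : ((a+b)*b - 2*(a*b))/((b-a)*b) = 1 := by
    rw [div_eq_one_iff_eq (by positivity)]; ring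
  have e2 : ((2*b-(a+b))/(b-a)) = 1 := by
    rw [div_eq_one_iff_eq hba.ne']; ring
  have e3 : ((a+b)*a - 2*(a*b))/((b-a)*a) = -1 := by
    rw [div_eq_iff (by positivity)]; ring
  have e4 : ((2*a-(a+b))/(b-a)) = -1 := by
    rw [div_eq_iff hba.ne']; ring
  simp only [e1, e2, e3, e4, Real.arcsin_one, Real.arcsin_neg_one, sub_self, zero_mul,
    mul_zero, Real.sqrt_zero, zero_div]
  ring

/-- The inverse moment of the Marchenko–Pastur-type measure `μ_mp` with parameter
`ρ̃ > 1` equals `1/(ρ̃ - 1)`: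
`∫ x⁻¹ dμ_mp(x) = ∫_{λ₋}^{λ₊} √((λ₊ - x)(x - λ₋)) / (2π x²) dx = 1/(ρ̃ - 1)`.
(This is the value `S_{μ_mp}(0)` of the Stieltjes transform at `z = 0`.) -/
theorem stmt9
    (ρt : ℝ) (hρt : 1 < ρt)
    (lm lp : ℝ) (hlm : lm = (1 - Real.sqrt ρt) ^ 2) (hlp : lp = (1 + Real.sqrt ρt) ^ 2)
    (μ : Measure ℝ)
    (hμ : μ = volume.withDensity (fun x => ENNReal.ofReal
      (Set.indicator (Set.Icc lm lp)
        (fun y => Real.sqrt ((lp - y) * (y - lm)) / (2 * π * y)) x))) :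
    (∫ x, x⁻¹ ∂μ) = 1 / (ρt - 1) ∧
    (∫ x in Set.Icc lm lp, Real.sqrt ((lp - x) * (x - lm)) / (2 * π * x ^ 2)) =
      1 / (ρt - 1) := by
  have hρ0 : (0:ℝ) < ρt := lt_trans one_pos hρt
  have hss : Real.sqrt ρt ^ 2 = ρt := Real.sq_sqrt hρ0.le
  have hs1 : 1 < Real.sqrt ρt := by
    have := Real.sqrt_lt_sqrt (by norm_num) hρt
    simpa using this
  have ha : 0 < lm := by rw [hlm]; nlinarith
  have hab : lm < lp := by rw [hlm, hlp]; nlinarith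
  have hb : 0 < lp := ha.trans hab
  have hprod : lm * lp = (ρt - 1)^2 := by
    rw [hlm, hlp]
    linear_combination (Real.sqrt ρt ^ 2 + ρt - 2) * hss
  have hsum : lm + lp = 2 * (1 + ρt) := by
    rw [hlm, hlp]; linear_combination 2 * hss
  have hsqab : Real.sqrt (lm * lp) = ρt - 1 := by
    rw [hprod, Real.sqrt_sq (by linarith)]
  have hρ1 : ρt - 1 ≠ 0 := by linarith
  -- the interval integral value
  have hI : ∫ x in lm..lp, Real.sqrt ((lp - x) * (x - lm)) / x ^ 2 = 2 * π / (ρt - 1) := by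
    rw [mp_integral lm lp ha hab, hsqab, hsum]
    field_simp
    ring
  -- second claim
  have h2 : (∫ x in Set.Icc lm lp, Real.sqrt ((lp - x) * (x - lm)) / (2 * π * x ^ 2)) =
      1 / (ρt - 1) := by
    rw [MeasureTheory.integral_Icc_eq_integral_Ioc,
      ← intervalIntegral.integral_of_le hab.le]
    have : ∀ x : ℝ, Real.sqrt ((lp - x) * (x - lm)) / (2 * π * x ^ 2)
        = (2 * π)⁻¹ * (Real.sqrt ((lp - x) * (x - lm)) / x ^ 2) := by
      intro x
      rw [mul_comm (2 * π) (x ^ 2), div_mul_eq_div_div, div_eq_inv_mul]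
    simp_rw [this]
    rw [intervalIntegral.integral_const_mul, hI]
    field_simp
  refine ⟨?_, h2⟩
  -- first claim: reduce the withDensity integral to the set integral
  have hmeas : Measurable (fun x : ℝ => (Set.indicator (Set.Icc lm lp)
      (fun y => Real.sqrt ((lp - y) * (y - lm)) / (2 * π * y)) x).toNNReal) := by
    apply Measurable.real_toNNReal
    apply Measurable.indicator _ measurableSet_Icc
    exact (Real.continuous_sqrt.comp
      ((continuous_const.sub continuous_id).mul (continuous_id.sub continuous_const))).measurable.div
      (measurable_const.mul measurable_id)
  have hnn : ∀ x : ℝ, 0 ≤ Set.indicator (Set.Icc lm lp)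
      (fun y => Real.sqrt ((lp - y) * (y - lm)) / (2 * π * y)) x := by
    intro x
    apply Set.indicator_nonneg
    intro y hy
    have hy0 : 0 < y := lt_of_lt_of_le ha hy.1
    positivity
  rw [hμ]
  have hofReal : (fun x : ℝ => ENNReal.ofReal
      (Set.indicator (Set.Icc lm lp)
        (fun y => Real.sqrt ((lp - y) * (y - lm)) / (2 * π * y)) x))
      = fun x : ℝ => ((Set.indicator (Set.Icc lm lp)
        (fun y => Real.sqrt ((lp - y) * (y - lm)) / (2 * π * y)) x).toNNReal : ENNReal) := rfl
  rw [hofReal, integral_withDensity_eq_integral_smul hmeas]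
  have : (fun x : ℝ => (Set.indicator (Set.Icc lm lp)
      (fun y => Real.sqrt ((lp - y) * (y - lm)) / (2 * π * y)) x).toNNReal • x⁻¹)
      = fun x : ℝ => Set.indicator (Set.Icc lm lp)
        (fun y => Real.sqrt ((lp - y) * (y - lm)) / (2 * π * y) * y⁻¹) x := by
    funext x
    rw [NNReal.smul_def, Real.coe_toNNReal _ (hnn x), smul_eq_mul]
    by_cases hmem : x ∈ Set.Icc lm lp
    · simp [Set.indicator_of_mem hmem]
    · simp [Set.indicator_of_notMem hmem]
  rw [this, MeasureTheory.integral_indicator measurableSet_Icc]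
  rw [← h2]
  apply MeasureTheory.setIntegral_congr_fun measurableSet_Icc
  intro x hx
  have hx0 : 0 < x := lt_of_lt_of_le ha hx.1
  show Real.sqrt ((lp - x) * (x - lm)) / (2 * π * x) * x⁻¹
      = Real.sqrt ((lp - x) * (x - lm)) / (2 * π * x ^ 2)
  rw [← div_eq_mul_inv, div_div]
  congr 1
  ring
end

section
/- The Stieltjes transform of the Marchenko–Pastur-type measure satisfies the quadratic relation: for every z ∈ ℂ with z ∉ [λ₋, λ₊], one has z · S(z)² + (z + 1 − ρ̃) · S(z) + 1 = 0, where S(z) := ∫ (x − z)⁻¹ dμ_mp(x); equivalently, for z ≠ 0 with 1 + S(z) ≠ 0, S(z) = −1/z + (ρ̃/z) · S(z)/(1 + S(z)). -/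
open MeasureTheory Real intervalIntegral

lemma mp_core (d v : ℝ) (hd : 0 < d) (hv : d < |v|) :
    ∫ θ in (-(π/2))..(π/2), d^2 * Real.cos θ^2 / (v - d * Real.sin θ)
      = π*v - 2*Real.sqrt (v^2-d^2) *
        (Real.arctan ((v-d)/Real.sqrt (v^2-d^2)) + Real.arctan ((v+d)/Real.sqrt (v^2-d^2))) := by
  have hD : 0 < v^2 - d^2 := by nlinarith [sq_abs v, abs_nonneg v]
  set sq := Real.sqrt (v^2 - d^2) with hsqdef
  have hsq2 : sq^2 = v^2 - d^2 := Real.sq_sqrt hD.le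
  have hsqpos : 0 < sq := Real.sqrt_pos.mpr hD
  have hvne : v ≠ 0 := by intro h; rw [h, abs_zero] at hv; linarith
  have hne : ∀ θ : ℝ, v - d * Real.sin θ ≠ 0 := by
    intro θ h
    have h1 : |Real.sin θ| ≤ 1 := abs_le.mpr ⟨Real.neg_one_le_sin θ, Real.sin_le_one θ⟩
    have h2 : v = d * Real.sin θ := by linarith
    have h3 : |v| = d * |Real.sin θ| := by rw [h2, abs_mul, abs_of_pos hd]
    nlinarith
  set G : ℝ → ℝ := fun θ => -d * Real.cos θ + v * θ
      - 2*sq * Real.arctan ((v * Real.tan (θ/2) - d)/sq) with hGdef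
  have hderiv : ∀ θ ∈ Set.uIcc (-(π/2)) (π/2),
      HasDerivAt G (d^2 * Real.cos θ^2 / (v - d * Real.sin θ)) θ := by
    intro θ hθ
    rw [Set.uIcc_of_le (by linarith [pi_pos] : -(π/2) ≤ π/2)] at hθ
    have hθ1 : -(π/2) ≤ θ := hθ.1
    have hθ2 : θ ≤ π/2 := hθ.2
    have hcos : 0 < Real.cos (θ/2) := by
      apply Real.cos_pos_of_mem_Ioo
      constructor <;> [linarith [pi_pos]; linarith [pi_pos]]
    have hhalf : HasDerivAt (fun θ : ℝ => θ/2) (1/2) θ := by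
      simpa using (hasDerivAt_id θ).div_const 2
    have htan : HasDerivAt (fun θ : ℝ => Real.tan (θ/2)) (1 / Real.cos (θ/2)^2 * (1/2)) θ :=
      by have := (Real.hasDerivAt_tan hcos.ne').comp θ hhalf; exact this
    have hu : HasDerivAt (fun θ : ℝ => (v * Real.tan (θ/2) - d)/sq)
        (v * (1 / Real.cos (θ/2)^2 * (1/2)) / sq) θ :=
      ((htan.const_mul v).sub_const d).div_const sq
    have harc : HasDerivAt (fun θ : ℝ => Real.arctan ((v * Real.tan (θ/2) - d)/sq))
        ((1 + ((v * Real.tan (θ/2) - d)/sq)^2)⁻¹ * (v * (1 / Real.cos (θ/2)^2 * (1/2)) / sq)) θ := by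
      convert hu.arctan using 1; simp only [one_div]
    have h1 : HasDerivAt (fun θ : ℝ => -d * Real.cos θ) (-d * (-Real.sin θ)) θ :=
      (Real.hasDerivAt_cos θ).const_mul (-d)
    have h2 : HasDerivAt (fun θ : ℝ => v * θ) v θ := by
      simpa using (hasDerivAt_id θ).const_mul v
    have h := (h1.add h2).sub (harc.const_mul (2*sq))
    convert h using 1
    case e'_4 => rfl
    case e'_5 => rfl
    case e'_8 => rfl
    -- equality of derivative expressions
    set s := Real.sin (θ/2) with hsdef
    set co := Real.cos (θ/2) with hcodef
    have hs2c : Real.sin θ = 2 * s * co := by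
      have := Real.sin_two_mul (θ/2)
      rw [show 2*(θ/2) = θ by ring] at this
      linarith
    have hpyth : s^2 + co^2 = 1 := Real.sin_sq_add_cos_sq (θ/2)
    have hpythθ : Real.sin θ^2 + Real.cos θ^2 = 1 := Real.sin_sq_add_cos_sq θ
    have htanval : Real.tan (θ/2) = s / co := Real.tan_eq_sin_div_cos _
    rw [htanval]
    have key : (1 + ((v * (s/co) - d)/sq)^2)⁻¹ * (v * (1 / co^2 * (1/2)) / sq) * (2*sq)
        = (v^2-d^2)/(v - d*Real.sin θ) := by
      have e1 : ((v * (s/co) - d)/sq)^2 = (v*(s/co) - d)^2/(v^2 - d^2) := by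
        rw [div_pow, hsq2]
      rw [e1, hs2c]
      have hne2 : v - d*(2*s*co) ≠ 0 := by rw [← hs2c]; exact hne θ
      have h1u : 1 + (v * (s/co) - d)^2/(v^2-d^2) ≠ 0 := by positivity
      field_simp [hne2]
      rw [eq_div_iff (by contrapose! hne2; linear_combination hne2)]
      linear_combination (-v^2) * hpyth
    have key2 : d^2 * Real.cos θ^2 / (v - d * Real.sin θ)
        = d * Real.sin θ + v - (v^2-d^2)/(v - d*Real.sin θ) := by
      field_simp [hne θ]
      linear_combination (d^2) * hpythθ
    rw [key2, ← key]
    ring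
  have hcont : Continuous (fun θ : ℝ => d^2 * Real.cos θ^2 / (v - d * Real.sin θ)) :=
    (continuous_const.mul (Real.continuous_cos.pow 2)).div
      (continuous_const.sub (continuous_const.mul Real.continuous_sin)) hne
  rw [intervalIntegral.integral_eq_sub_of_hasDerivAt hderiv (hcont.intervalIntegrable _ _)]
  simp only [hGdef]
  have h4 : (π/2)/2 = π/4 := by ring
  have h4' : (-(π/2))/2 = -(π/4) := by ring
  rw [h4, h4', Real.tan_neg, Real.tan_pi_div_four, Real.cos_pi_div_two, Real.cos_neg,
    Real.cos_pi_div_two]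
  rw [show v * 1 - d = v - d by ring, show v * (-1) - d = -(v+d) by ring, neg_div,
    Real.arctan_neg]
  ring

lemma mp_corePos (d v : ℝ) (hd : 0 < d) (hv : d < v) :
    ∫ θ in (-(π/2))..(π/2), d^2 * Real.cos θ^2 / (v - d * Real.sin θ)
      = π * (v - Real.sqrt (v^2-d^2)) := by
  have hD : 0 < v^2 - d^2 := by nlinarith
  have hsq2 : Real.sqrt (v^2-d^2)^2 = v^2 - d^2 := Real.sq_sqrt hD.le
  have hsqpos : 0 < Real.sqrt (v^2-d^2) := Real.sqrt_pos.mpr hD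
  rw [mp_core d v hd (by rw [abs_of_pos (by linarith)]; exact hv)]
  have hα : 0 < (v-d)/Real.sqrt (v^2-d^2) := div_pos (by linarith) hsqpos
  have hβ : (v+d)/Real.sqrt (v^2-d^2) = ((v-d)/Real.sqrt (v^2-d^2))⁻¹ := by
    rw [inv_div, div_eq_div_iff hsqpos.ne' (by linarith : v - d ≠ 0)]
    nlinarith
  rw [hβ, Real.arctan_inv_of_pos hα]
  ring

lemma mp_coreNeg (d v : ℝ) (hd : 0 < d) (hv : v < -d) :
    ∫ θ in (-(π/2))..(π/2), d^2 * Real.cos θ^2 / (v - d * Real.sin θ)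
      = π * (v + Real.sqrt (v^2-d^2)) := by
  have hD : 0 < v^2 - d^2 := by nlinarith
  have hsq2 : Real.sqrt (v^2-d^2)^2 = v^2 - d^2 := Real.sq_sqrt hD.le
  have hsqpos : 0 < Real.sqrt (v^2-d^2) := Real.sqrt_pos.mpr hD
  rw [mp_core d v hd (by rw [abs_of_neg (by linarith)]; linarith)]
  have hα : (v-d)/Real.sqrt (v^2-d^2) < 0 := by
    apply div_neg_of_neg_of_pos (by linarith) hsqpos
  have hβ : (v+d)/Real.sqrt (v^2-d^2) = ((v-d)/Real.sqrt (v^2-d^2))⁻¹ := by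
    rw [inv_div, div_eq_div_iff hsqpos.ne' (by linarith : v - d ≠ 0)]
    nlinarith
  rw [hβ, Real.arctan_inv_of_neg hα]
  ring

lemma mp_subst (c d : ℝ) (hd : 0 < d) (h : ℝ → ℝ)
    (hh : ContinuousOn h (Set.Icc (c-d) (c+d))) :
    ∫ x in (c-d)..(c+d), Real.sqrt ((c+d - x) * (x - (c-d))) * h x
      = ∫ θ in (-(π/2))..(π/2), d^2 * Real.cos θ^2 * h (c + d * Real.sin θ) := by
  have hle : -(π/2) ≤ (π/2) := by linarith [pi_pos]
  have hderiv : ∀ θ ∈ Set.uIcc (-(π/2)) (π/2),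
      HasDerivAt (fun θ : ℝ => c + d*Real.sin θ) (d*Real.cos θ) θ := fun θ _ => by
    simpa using ((Real.hasDerivAt_sin θ).const_mul d).const_add c
  have himg : (fun θ : ℝ => c + d*Real.sin θ) '' Set.uIcc (-(π/2)) (π/2)
      ⊆ Set.Icc (c-d) (c+d) := by
    rintro _ ⟨θ, hθ, rfl⟩
    have h1 := mul_le_mul_of_nonneg_left (Real.neg_one_le_sin θ) hd.le
    have h2 := mul_le_mul_of_nonneg_left (Real.sin_le_one θ) hd.le
    simp only
    constructor <;> [linarith; linarith]
  have gcont : Continuous (fun x : ℝ => Real.sqrt ((c+d - x) * (x - (c-d)))) :=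
    Real.continuous_sqrt.comp ((continuous_const.sub continuous_id).mul
      (continuous_id.sub continuous_const))
  have key := intervalIntegral.integral_comp_smul_deriv' hderiv
    ((continuous_const.mul Real.continuous_cos).continuousOn)
    ((gcont.continuousOn.mul hh).mono himg)
  simp only [Real.sin_pi_div_two, Real.sin_neg, Function.comp, Pi.mul_apply] at key
  rw [show c + d * -1 = c - d by ring, show c + d * 1 = c + d by ring] at key
  rw [← key]
  apply intervalIntegral.integral_congr
  intro θ hθ
  rw [Set.uIcc_of_le hle] at hθ
  have hcos : 0 ≤ Real.cos θ := Real.cos_nonneg_of_mem_Icc (by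
    constructor <;> [exact hθ.1; exact hθ.2])
  have harg : (c + d - (c + d * Real.sin θ)) * (c + d * Real.sin θ - (c - d))
      = (d * Real.cos θ)^2 := by
    have := Real.sin_sq_add_cos_sq θ
    linear_combination (-(d^2)) * this
  simp only [smul_eq_mul]
  rw [harg, Real.sqrt_sq (by positivity)]
  ring

lemma mp_real (ρt : ℝ) (hρt : 1 < ρt) (lm lp : ℝ)
    (hlm : lm = (1 - Real.sqrt ρt)^2) (hlp : lp = (1 + Real.sqrt ρt)^2)
    (t : ℝ) (ht : lp < t) :
    ∫ x in lm..lp, Real.sqrt ((lp - x)*(x - lm)) / (2*π*x) * (x - t)⁻¹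
      = (Real.sqrt ((t-lm)*(t-lp)) - t + ρt - 1)/(2*t) := by
  have hπ := pi_pos
  set sr := Real.sqrt ρt with hsrdef
  have hsr2 : sr^2 = ρt := Real.sq_sqrt (by linarith)
  have hsr : 1 < sr := by
    nlinarith [Real.sqrt_nonneg ρt]
  set c : ℝ := 1 + ρt with hcdef
  set d : ℝ := 2*sr with hddef
  have hd : 0 < d := by simp only [hddef]; linarith
  have hlm' : lm = c - d := by rw [hlm]; simp only [hcdef, hddef]; linear_combination hsr2
  have hlp' : lp = c + d := by rw [hlp]; simp only [hcdef, hddef]; linear_combination hsr2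
  have hlmpos : 0 < lm := by rw [hlm]; nlinarith
  have hlplm : lm < lp := by rw [hlm', hlp']; linarith
  have htpos : 0 < t := by linarith [hlplm, hlmpos]
  have hcd : d < c := by rw [← sub_pos]; rw [hlm'] at hlmpos; linarith
  have gcont : Continuous (fun x : ℝ => Real.sqrt ((lp - x) * (x - lm))) :=
    Real.continuous_sqrt.comp ((continuous_const.sub continuous_id).mul
      (continuous_id.sub continuous_const))
  have hxne : ∀ x ∈ Set.Icc lm lp, x ≠ 0 := fun x hx => by
    have := hx.1; intro h; rw [h] at this; linarith
  have htne : ∀ x ∈ Set.Icc lm lp, x - t ≠ 0 := fun x hx => by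
    have := hx.2; intro h; have : x = t := by linarith
    linarith [hx.2]
  -- integrability of the two pieces
  have i1 : IntervalIntegrable (fun x => Real.sqrt ((lp - x)*(x - lm)) * (x - t)⁻¹)
      volume lm lp := by
    apply ContinuousOn.intervalIntegrable
    rw [Set.uIcc_of_le hlplm.le]
    exact gcont.continuousOn.mul (((continuousOn_id).sub continuousOn_const).inv₀ htne)
  have i2 : IntervalIntegrable (fun x => Real.sqrt ((lp - x)*(x - lm)) * x⁻¹)
      volume lm lp := by
    apply ContinuousOn.intervalIntegrable
    rw [Set.uIcc_of_le hlplm.le]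
    exact gcont.continuousOn.mul (continuousOn_id.inv₀ hxne)
  -- step 1: partial fractions
  have step1 : ∫ x in lm..lp, Real.sqrt ((lp - x)*(x - lm)) / (2*π*x) * (x - t)⁻¹
      = (1/(2*π*t)) * ((∫ x in lm..lp, Real.sqrt ((lp - x)*(x - lm)) * (x - t)⁻¹)
          - ∫ x in lm..lp, Real.sqrt ((lp - x)*(x - lm)) * x⁻¹) := by
    rw [← intervalIntegral.integral_sub i1 i2, ← intervalIntegral.integral_const_mul]
    apply intervalIntegral.integral_congr
    intro x hx
    rw [Set.uIcc_of_le hlplm.le] at hx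
    have h1 := hxne x hx
    have h2 := htne x hx
    field_simp
    ring
  -- step 2: first integral
  have step2 : ∫ x in lm..lp, Real.sqrt ((lp - x)*(x - lm)) * (x - t)⁻¹
      = -π * ((t - c) - Real.sqrt ((t-lm)*(t-lp))) := by
    have hsub := mp_subst c d hd (fun x => (x - t)⁻¹) (by
      apply ContinuousOn.inv₀ ((continuousOn_id).sub continuousOn_const)
      rw [← hlm', ← hlp']; exact htne)
    rw [hlm', hlp']
    rw [hsub]
    have hv : d < t - c := by rw [hlp'] at ht; linarith
    have congr2 : ∫ θ in (-(π/2))..(π/2), d^2 * Real.cos θ^2 * ((c + d * Real.sin θ) - t)⁻¹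
        = ∫ θ in (-(π/2))..(π/2), -(d^2 * Real.cos θ^2 / ((t-c) - d * Real.sin θ)) := by
      apply intervalIntegral.integral_congr
      intro θ _
      show d^2 * Real.cos θ^2 * ((c + d * Real.sin θ) - t)⁻¹
          = -(d^2 * Real.cos θ^2 / ((t-c) - d * Real.sin θ))
      rw [show c + d * Real.sin θ - t = -((t-c) - d * Real.sin θ) by ring, div_eq_mul_inv,
        inv_neg]
      ring
    rw [congr2, intervalIntegral.integral_neg, mp_corePos d (t-c) hd hv]
    have : (t-c)^2 - d^2 = (t-(c-d))*(t-(c+d)) := by ring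
    rw [this]
    ring
  -- step 3: second integral
  have step3 : ∫ x in lm..lp, Real.sqrt ((lp - x)*(x - lm)) * x⁻¹ = 2*π := by
    have hsub := mp_subst c d hd (fun x => x⁻¹) (by
      apply ContinuousOn.inv₀ continuousOn_id
      rw [← hlm', ← hlp']; exact hxne)
    rw [hlm', hlp']
    rw [hsub]
    have congr3 : ∫ θ in (-(π/2))..(π/2), d^2 * Real.cos θ^2 * (c + d * Real.sin θ)⁻¹
        = ∫ θ in (-(π/2))..(π/2), -(d^2 * Real.cos θ^2 / ((-c) - d * Real.sin θ)) := by
      apply intervalIntegral.integral_congr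
      intro θ _
      show d^2 * Real.cos θ^2 * (c + d * Real.sin θ)⁻¹
          = -(d^2 * Real.cos θ^2 / ((-c) - d * Real.sin θ))
      rw [show c + d * Real.sin θ = -((-c) - d * Real.sin θ) by ring, div_eq_mul_inv, inv_neg]
      ring
    rw [congr3, intervalIntegral.integral_neg, mp_coreNeg d (-c) hd (by linarith)]
    have h1 : (-c)^2 - d^2 = (ρt - 1)^2 := by
      simp only [hcdef, hddef]; linear_combination (-4:ℝ) * hsr2
    rw [h1, Real.sqrt_sq (by linarith)]
    simp only [hcdef, hddef]
    ring_nf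
  rw [step1, step2, step3]
  field_simp
  ring

lemma mp_U_preconnected (lm lp : ℝ) :
    IsPreconnected {z : ℂ | ¬ ∃ x : ℝ, x ∈ Set.Icc lm lp ∧ (x:ℂ) = z} := by
  have hslit : IsPreconnected Complex.slitPlane := by
    apply isPreconnected_of_forall (1 : ℂ)
    intro y hy
    exact ⟨segment ℝ 1 y, Complex.starConvex_one_slitPlane.segment_subset hy,
      left_mem_segment ℝ 1 y, right_mem_segment ℝ 1 y, (convex_segment 1 y).isPreconnected⟩
  have h1 : IsPreconnected ((fun z : ℂ => z + (lp:ℂ)) '' Complex.slitPlane) :=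
    hslit.image _ (continuous_id.add continuous_const).continuousOn
  have h2 : IsPreconnected ((fun z : ℂ => (lm:ℂ) - z) '' Complex.slitPlane) :=
    hslit.image _ (continuous_const.sub continuous_id).continuousOn
  have c1 : ∀ z : ℂ, z ∈ (fun z : ℂ => z + (lp:ℂ)) '' Complex.slitPlane
      ↔ (lp < z.re ∨ z.im ≠ 0) := by
    intro z; constructor
    · rintro ⟨w, hw, rfl⟩
      rw [Complex.mem_slitPlane_iff] at hw
      simpa using hw
    · intro h
      refine ⟨z - (lp:ℂ), Complex.mem_slitPlane_iff.mpr ?_, by ring⟩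
      simpa using h
  have c2 : ∀ z : ℂ, z ∈ (fun z : ℂ => (lm:ℂ) - z) '' Complex.slitPlane
      ↔ (z.re < lm ∨ z.im ≠ 0) := by
    intro z; constructor
    · rintro ⟨w, hw, rfl⟩
      rw [Complex.mem_slitPlane_iff] at hw
      simp only [Complex.sub_re, Complex.sub_im, Complex.ofReal_re, Complex.ofReal_im]
      rcases hw with h | h
      · left; linarith
      · right; simpa using h
    · intro h
      refine ⟨(lm:ℂ) - z, Complex.mem_slitPlane_iff.mpr ?_, by ring⟩
      simp only [Complex.sub_re, Complex.sub_im, Complex.ofReal_re, Complex.ofReal_im]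
      rcases h with h | h
      · left; linarith
      · right; simpa using h
  have hI1 : Complex.I ∈ (fun z : ℂ => z + (lp:ℂ)) '' Complex.slitPlane :=
    (c1 _).mpr (Or.inr (by simp))
  have hI2 : Complex.I ∈ (fun z : ℂ => (lm:ℂ) - z) '' Complex.slitPlane :=
    (c2 _).mpr (Or.inr (by simp))
  have hunion := IsPreconnected.union Complex.I hI1 hI2 h1 h2
  have heq : {z : ℂ | ¬ ∃ x : ℝ, x ∈ Set.Icc lm lp ∧ (x:ℂ) = z}
      = ((fun z : ℂ => z + (lp:ℂ)) '' Complex.slitPlane)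
        ∪ ((fun z : ℂ => (lm:ℂ) - z) '' Complex.slitPlane) := by
    ext z
    rw [Set.mem_union, c1, c2, Set.mem_setOf_eq]
    constructor
    · intro h
      by_contra hc
      push_neg at hc
      obtain ⟨⟨h1a, h1b⟩, h2a, _⟩ := hc
      exact h ⟨z.re, ⟨h2a, h1a⟩, Complex.ext (by simp) (by simp [h1b])⟩
    · rintro (h | h) ⟨x, hx, rfl⟩
      · rcases h with h | h
        · simp only [Complex.ofReal_re] at h; linarith [hx.2]
        · simp at h
      · rcases h with h | h
        · simp only [Complex.ofReal_re] at h; linarith [hx.1]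
        · simp at h
  rw [heq]
  exact hunion

/-- The Stieltjes transform `S(z) = ∫ (x - z)⁻¹ dμ_mp(x)` of the
Marchenko–Pastur-type measure with parameter `ρ̃ > 1` satisfies, for every
`z ∈ ℂ` outside the support `[λ₋, λ₊]`, the quadratic relation
`z S(z)² + (z + 1 - ρ̃) S(z) + 1 = 0`; equivalently, for `z ≠ 0` with
`1 + S(z) ≠ 0`, `S(z) = -1/z + (ρ̃/z) · S(z)/(1 + S(z))`. -/
theorem stmt10
    (ρt : ℝ) (hρt : 1 < ρt)
    (lm lp : ℝ) (hlm : lm = (1 - Real.sqrt ρt) ^ 2) (hlp : lp = (1 + Real.sqrt ρt) ^ 2)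
    (μ : Measure ℝ)
    (hμ : μ = volume.withDensity (fun x => ENNReal.ofReal
      (Set.indicator (Set.Icc lm lp)
        (fun y => Real.sqrt ((lp - y) * (y - lm)) / (2 * π * y)) x)))
    (S : ℂ → ℂ)
    (hS : ∀ z : ℂ, S z = ∫ x : ℝ, ((x : ℂ) - z)⁻¹ ∂μ) :
    ∀ z : ℂ, (¬ ∃ x : ℝ, x ∈ Set.Icc lm lp ∧ (x : ℂ) = z) →
      z * (S z) ^ 2 + (z + 1 - (ρt : ℂ)) * S z + 1 = 0 ∧
      (z ≠ 0 → 1 + S z ≠ 0 →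
        S z = -1 / z + ((ρt : ℂ) / z) * (S z / (1 + S z))) := by
  have hπ := pi_pos
  have hsr2 : (Real.sqrt ρt)^2 = ρt := Real.sq_sqrt (by linarith)
  have hsr : 1 < Real.sqrt ρt := by nlinarith [Real.sqrt_nonneg ρt]
  have hlmpos : 0 < lm := by rw [hlm]; nlinarith
  have hlplm : lm < lp := by rw [hlm, hlp]; nlinarith
  set w : ℝ → ℝ := Set.indicator (Set.Icc lm lp)
    (fun y => Real.sqrt ((lp - y) * (y - lm)) / (2 * π * y)) with hwdef
  have hw_meas : Measurable w := by
    apply Measurable.indicator _ measurableSet_Icc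
    exact (Real.continuous_sqrt.comp ((continuous_const.sub continuous_id).mul
      (continuous_id.sub continuous_const))).measurable.div
      (continuous_const.mul continuous_id).measurable
  have hw_nonneg : ∀ x, 0 ≤ w x := by
    intro x
    apply Set.indicator_nonneg
    intro y hy
    have hy1 : 0 < y := lt_of_lt_of_le hlmpos hy.1
    positivity
  -- conversion of the integral against μ
  have hconv : ∀ f : ℝ → ℂ, Measurable f → ∫ x, f x ∂μ = ∫ x, w x • f x := by
    intro f hf
    rw [hμ]
    rw [show (fun x => ENNReal.ofReal (w x)) = (fun x => ((w x).toNNReal : ENNReal)) from rfl]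
    rw [integral_withDensity_eq_integral_smul hw_meas.real_toNNReal f]
    congr 1
    funext x
    rw [NNReal.smul_def, Real.coe_toNNReal _ (hw_nonneg x)]
  -- value at real points beyond lp
  have hSval : ∀ t : ℝ, lp < t →
      S t = (((Real.sqrt ((t-lm)*(t-lp)) - t + ρt - 1)/(2*t) : ℝ) : ℂ) := by
    intro t ht
    rw [hS, hconv (fun x : ℝ => ((x:ℂ) - (t:ℂ))⁻¹) ((Complex.measurable_ofReal.sub measurable_const).inv)]
    have hind : (fun x : ℝ => w x • ((x:ℂ) - ((t:ℝ):ℂ))⁻¹)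
        = Set.indicator (Set.Icc lm lp)
            (fun x => ((Real.sqrt ((lp - x) * (x - lm)) / (2*π*x) * (x - t)⁻¹ : ℝ) : ℂ)) := by
      funext x
      by_cases hx : x ∈ Set.Icc lm lp
      · rw [Set.indicator_of_mem hx, hwdef, Set.indicator_of_mem hx, Complex.real_smul]
        push_cast
        ring
      · rw [Set.indicator_of_notMem hx, hwdef, Set.indicator_of_notMem hx, zero_smul]
    rw [hind, MeasureTheory.integral_indicator measurableSet_Icc, integral_Icc_eq_integral_Ioc,
      ← intervalIntegral.integral_of_le hlplm.le, intervalIntegral.integral_ofReal,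
      mp_real ρt hρt lm lp hlm hlp t ht]
  -- quadratic relation at real points beyond lp
  have hQ0 : ∀ t : ℝ, lp < t →
      (t:ℂ) * (S t)^2 + ((t:ℂ) + 1 - (ρt:ℂ)) * S t + 1 = 0 := by
    intro t ht
    have htpos : 0 < t := by linarith
    set R := Real.sqrt ((t-lm)*(t-lp)) with hRdef
    have hR2 : R^2 = (t-lm)*(t-lp) := Real.sq_sqrt (by nlinarith)
    have hsum : lm + lp = 2 + 2*ρt := by
      rw [hlm, hlp]; linear_combination 2*hsr2
    have hprod : lm*lp = (1-ρt)^2 := by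
      rw [hlm, hlp]; linear_combination ((Real.sqrt ρt)^2 + ρt - 2)*hsr2
    have hR2' : R^2 = t^2 - (2+2*ρt)*t + (1-ρt)^2 := by
      linear_combination hR2 - t*hsum + hprod
    have hsreal : t * ((R - t + ρt - 1)/(2*t))^2 + (t + 1 - ρt) * ((R - t + ρt - 1)/(2*t)) + 1
        = 0 := by
      field_simp
      linear_combination hR2'
    rw [hSval t ht]
    push_cast
    rw [← hRdef]
    have := congrArg (fun r : ℝ => (r : ℂ)) hsreal
    push_cast at this
    exact this
  -- the open set U
  have hU_open : IsOpen {z : ℂ | ¬ ∃ x : ℝ, x ∈ Set.Icc lm lp ∧ (x : ℂ) = z} := by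
    have heq : {z : ℂ | ¬ ∃ x : ℝ, x ∈ Set.Icc lm lp ∧ (x : ℂ) = z}
        = ((fun x : ℝ => (x:ℂ)) '' Set.Icc lm lp)ᶜ := by
      ext z; simp [Set.mem_image]
    rw [heq]
    exact (isCompact_Icc.image Complex.continuous_ofReal).isClosed.isOpen_compl
  -- μ is supported on Icc lm lp
  have hae : ∀ᵐ x ∂μ, x ∈ Set.Icc lm lp := by
    rw [hμ, ae_iff]
    have hset : {a : ℝ | ¬ a ∈ Set.Icc lm lp} = (Set.Icc lm lp)ᶜ := rfl
    rw [hset, withDensity_apply _ measurableSet_Icc.compl]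
    rw [setLIntegral_congr_fun measurableSet_Icc.compl
      (fun x hx => by
        rw [hwdef, Set.indicator_of_notMem hx, ENNReal.ofReal_zero] )]
    simp
  -- μ is a finite measure
  have hfin : IsFiniteMeasure μ := by
    constructor
    rw [hμ, withDensity_apply _ MeasurableSet.univ, Measure.restrict_univ]
    have hbound : ∀ x, ENNReal.ofReal (w x)
        ≤ Set.indicator (Set.Icc lm lp) (fun _ => ENNReal.ofReal ((lp-lm)/(2*π*lm))) x := by
      intro x
      by_cases hx : x ∈ Set.Icc lm lp
      · rw [Set.indicator_of_mem hx, hwdef, Set.indicator_of_mem hx]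
        apply ENNReal.ofReal_le_ofReal
        have hx1 := hx.1; have hx2 := hx.2
        have hs : Real.sqrt ((lp-x)*(x-lm)) ≤ lp - lm := by
          have h1 : (lp-x)*(x-lm) ≤ (lp-lm)^2 := by nlinarith
          calc Real.sqrt ((lp-x)*(x-lm)) ≤ Real.sqrt ((lp-lm)^2) := Real.sqrt_le_sqrt h1
          _ = lp - lm := Real.sqrt_sq (by linarith)
        exact div_le_div₀ (by linarith) hs (by positivity) (by nlinarith)
      · rw [Set.indicator_of_notMem hx, hwdef, Set.indicator_of_notMem hx]
        simp
    calc ∫⁻ x, ENNReal.ofReal (w x)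
        ≤ ∫⁻ x, Set.indicator (Set.Icc lm lp)
            (fun _ => ENNReal.ofReal ((lp-lm)/(2*π*lm))) x := lintegral_mono hbound
      _ = ENNReal.ofReal ((lp-lm)/(2*π*lm)) * volume (Set.Icc lm lp) := by
          rw [lintegral_indicator measurableSet_Icc, setLIntegral_const]
      _ < ⊤ := by
          rw [Real.volume_Icc]
          exact ENNReal.mul_lt_top ENNReal.ofReal_lt_top ENNReal.ofReal_lt_top
  -- S is differentiable on U
  have hSfun : S = fun z => ∫ x : ℝ, ((x : ℂ) - z)⁻¹ ∂μ := funext hS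
  have hSdiff : DifferentiableOn ℂ S {z : ℂ | ¬ ∃ x : ℝ, x ∈ Set.Icc lm lp ∧ (x : ℂ) = z} := by
    intro z₀ hz₀
    have hKcl : IsClosed ((fun x : ℝ => (x:ℂ)) '' Set.Icc lm lp) :=
      (isCompact_Icc.image Complex.continuous_ofReal).isClosed
    have hKne : ((fun x : ℝ => (x:ℂ)) '' Set.Icc lm lp).Nonempty :=
      ⟨lm, lm, ⟨le_refl lm, hlplm.le⟩, rfl⟩
    set δ := Metric.infDist z₀ ((fun x : ℝ => (x:ℂ)) '' Set.Icc lm lp) with hδdef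
    have hδpos : 0 < δ := by
      rcases lt_or_eq_of_le (Metric.infDist_nonneg (x := z₀)
        (s := (fun x : ℝ => (x:ℂ)) '' Set.Icc lm lp)) with h | h
      · exact h
      · exfalso
        have hmem : z₀ ∈ closure ((fun x : ℝ => (x:ℂ)) '' Set.Icc lm lp) :=
          (Metric.mem_closure_iff_infDist_zero hKne).mpr h.symm
        rw [hKcl.closure_eq] at hmem
        obtain ⟨x, hx, hxe⟩ := hmem
        exact hz₀ ⟨x, hx, hxe⟩
    have hdist : ∀ x ∈ Set.Icc lm lp, ∀ z ∈ Metric.ball z₀ (δ/2), δ/2 ≤ ‖(x:ℂ) - z‖ := by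
      intro x hx z hz
      have h1 : δ ≤ dist z₀ ((x:ℝ):ℂ) := Metric.infDist_le_dist_of_mem ⟨x, hx, rfl⟩
      have h2 : dist z z₀ < δ/2 := hz
      have h3 : dist z₀ ((x:ℝ):ℂ) ≤ dist z₀ z + dist z ((x:ℝ):ℂ) := dist_triangle _ _ _
      have h4 : ‖(x:ℂ) - z‖ = dist ((x:ℝ):ℂ) z := by rw [dist_eq_norm]
      rw [h4, dist_comm]
      rw [dist_comm z z₀] at h2
      linarith [h2, h3, h1, (by rw [dist_comm] : dist z ((x:ℝ):ℂ) = dist ((x:ℝ):ℂ) z)]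
    have hmeasF : ∀ z : ℂ, AEStronglyMeasurable (fun x : ℝ => ((x:ℂ) - z)⁻¹) μ :=
      fun z => ((Complex.measurable_ofReal.sub measurable_const).inv).aestronglyMeasurable
    have hkey := _root_.hasDerivAt_integral_of_dominated_loc_of_deriv_le
      (F := fun (z : ℂ) (x : ℝ) => ((x:ℂ) - z)⁻¹)
      (F' := fun (z : ℂ) (x : ℝ) => (((x:ℂ) - z)^2)⁻¹)
      (x₀ := z₀) (s := Metric.ball z₀ (δ/2)) (bound := fun _ => ((δ/2)^2)⁻¹) (μ := μ)
      (Metric.ball_mem_nhds z₀ (by positivity))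
      (Filter.Eventually.of_forall fun z => hmeasF z)
      (by
        apply Integrable.mono' (integrable_const ((δ/2)⁻¹)) (hmeasF z₀)
        filter_upwards [hae] with x hx
        rw [norm_inv]
        have h1 := hdist x hx z₀ (Metric.mem_ball_self (by positivity))
        exact inv_anti₀ (by positivity) h1)
      (((Complex.measurable_ofReal.sub measurable_const).pow_const 2).inv.aestronglyMeasurable)
      (by
        filter_upwards [hae] with x hx z hz
        rw [norm_inv, norm_pow]
        have h1 := hdist x hx z hz
        have h2 : (δ/2)^2 ≤ ‖(x:ℂ) - z‖^2 := by nlinarith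
        exact inv_anti₀ (by positivity) h2)
      (integrable_const _)
      (by
        filter_upwards [hae] with x hx z hz
        have h0 : (x:ℂ) - z ≠ 0 := by
          intro h
          have h1 := hdist x hx z hz
          rw [h, norm_zero] at h1
          linarith
        have hlin : HasDerivAt (fun z : ℂ => (x:ℂ) - z) (-1) z := by
          simpa using (hasDerivAt_id z).const_sub ((x:ℝ):ℂ)
        have := hlin.inv h0
        exact this.congr_deriv (by rw [neg_neg, one_div]))
    rw [hSfun]
    exact hkey.2.differentiableAt.differentiableWithinAt
  -- Q is zero on U by the identity theorem
  have hSa : AnalyticOnNhd ℂ S {z : ℂ | ¬ ∃ x : ℝ, x ∈ Set.Icc lm lp ∧ (x : ℂ) = z} :=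
    hSdiff.analyticOnNhd hU_open
  have hQa : AnalyticOnNhd ℂ (fun z => z * (S z)^2 + (z + 1 - (ρt:ℂ)) * S z + 1)
      {z : ℂ | ¬ ∃ x : ℝ, x ∈ Set.Icc lm lp ∧ (x : ℂ) = z} :=
    ((analyticOnNhd_id.mul (hSa.pow 2)).add
      (((analyticOnNhd_id.add analyticOnNhd_const).sub analyticOnNhd_const).mul hSa)).add
      analyticOnNhd_const
  have hz₀U : (((lp + 1 : ℝ):ℂ)) ∈ {z : ℂ | ¬ ∃ x : ℝ, x ∈ Set.Icc lm lp ∧ (x : ℂ) = z} := by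
    rintro ⟨x, hx, hxe⟩
    have : x = lp + 1 := Complex.ofReal_inj.mp hxe
    linarith [hx.2]
  have hfreq : ∃ᶠ z in nhdsWithin (((lp + 1 : ℝ):ℂ)) {(((lp + 1 : ℝ):ℂ))}ᶜ,
      (fun z => z * (S z)^2 + (z + 1 - (ρt:ℂ)) * S z + 1) z = 0 := by
    have hu : Filter.Tendsto (fun n : ℕ => ((lp + 1 + 1/(n+1) : ℝ) : ℂ)) Filter.atTop
        (nhdsWithin (((lp + 1 : ℝ):ℂ)) {(((lp + 1 : ℝ):ℂ))}ᶜ) := by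
      rw [tendsto_nhdsWithin_iff]
      constructor
      · apply (Complex.continuous_ofReal.tendsto _).comp
        have := tendsto_one_div_add_atTop_nhds_zero_nat (𝕜 := ℝ)
        have h2 := Filter.Tendsto.add (tendsto_const_nhds (x := (lp+1:ℝ))) this
        simpa using h2
      · apply Filter.Eventually.of_forall
        intro n
        simp only [Set.mem_compl_iff, Set.mem_singleton_iff]
        intro h
        have h1 := Complex.ofReal_inj.mp h
        have h2 : (0:ℝ) < 1/((n:ℝ)+1) := by positivity
        linarith
    exact hu.frequently (Filter.Frequently.of_forall fun n => hQ0 _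
      (by
        have h2 : (0:ℝ) < 1/((n:ℝ)+1) := by positivity
        linarith))
  have hEq := hQa.eqOn_zero_of_preconnected_of_frequently_eq_zero
    (mp_U_preconnected lm lp) hz₀U hfreq
  -- conclusion
  intro z hz
  have h1 : z * (S z)^2 + (z + 1 - (ρt:ℂ)) * S z + 1 = 0 := hEq hz
  refine ⟨h1, ?_⟩
  intro hz0 hzS
  field_simp
  linear_combination h1
end
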